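/- If for all rounds t ≤ T the instantaneous regret satisfies r_t ≤ 2β_T σ_t + c_t with σ_t ∈ [0,1], c_t ≥ 0, and ∑_{t=1}^T 2 log(1 + σ_t²) ≤ 4γ_T, then the cumulative regret satisfies ∑_{t=1}^T r_t⁺ ≤ 4 β_T sqrt(T γ_T) + ∑_{t=1}^T c_t, assuming each bound 2β_Tσ_t + c_t is nonnegative. -/
import Mathlib


open Finset

lemma aux_le_two_log {α : ℝ} (h0 : 0 ≤ α) (h1 : α ≤ 1) :
    α ≤ 2 * Real.log (1 + α) := by
  have h2 : (0:ℝ) < 1 + α := by linarith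
  rw [show (2 : ℝ) * Real.log (1 + α) = Real.log ((1+α)^2) by
    rw [Real.log_pow]; push_cast; ring]
  rw [Real.le_log_iff_exp_le (by positivity)]
  have hexp : Real.exp α ≤ (1 + α) ^ 2 := by
    have h3 : 1 - α/2 ≤ Real.exp (-(α/2)) := by
      have := Real.add_one_le_exp (-(α/2)); linarith
    have h4 : Real.exp (α/2) ≤ 1 + α := by
      have hpos : (0:ℝ) < 1 - α/2 := by linarith
      have : Real.exp (α/2) = 1 / Real.exp (-(α/2)) := by
        rw [Real.exp_neg]; field_simp
      rw [this]
      rw [div_le_iff₀ (Real.exp_pos _)]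
      calc (1:ℝ) ≤ (1 + α) * (1 - α/2) := by nlinarith
        _ ≤ (1 + α) * Real.exp (-(α/2)) := by nlinarith
    calc Real.exp α = Real.exp (α/2) * Real.exp (α/2) := by
          rw [← Real.exp_add]; ring_nf
      _ ≤ (1 + α) * (1 + α) := by
          exact mul_le_mul h4 h4 (Real.exp_pos _).le (by linarith)
      _ = (1 + α) ^ 2 := by ring
  exact hexp

/-- Cumulative regret bound from instantaneous bounds: if `r_t ≤ 2β_T σ_t + c_t` with
`σ_t ∈ [0,1]`, `c_t ≥ 0`, and `∑ 2 log(1 + σ_t²) ≤ 4 γ_T`, then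
`∑ r_t⁺ ≤ 4 β_T √(T γ_T) + ∑ c_t`. -/
theorem cumulative_regret_bound (T : ℕ) (hT : 0 < T)
    (β γ : ℝ) (hβ : 0 ≤ β) (hγ : 0 ≤ γ)
    (r σ c : Fin T → ℝ)
    (hσ0 : ∀ t, 0 ≤ σ t) (hσ1 : ∀ t, σ t ≤ 1) (hc : ∀ t, 0 ≤ c t)
    (hr : ∀ t, r t ≤ 2 * β * σ t + c t)
    (hlog : ∑ t, 2 * Real.log (1 + (σ t) ^ 2) ≤ 4 * γ) :
    ∑ t, max 0 (r t) ≤ 4 * β * Real.sqrt ((T : ℝ) * γ) + ∑ t, c t := by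
  have hstep : ∀ t, max 0 (r t) ≤ 2 * β * σ t + c t := fun t =>
    max_le (by have := hσ0 t; have := hc t; positivity) (hr t)
  have h1 : ∑ t, max 0 (r t) ≤ 2 * β * (∑ t, σ t) + ∑ t, c t := by
    calc ∑ t, max 0 (r t) ≤ ∑ t, (2 * β * σ t + c t) :=
          Finset.sum_le_sum fun t _ => hstep t
      _ = 2 * β * (∑ t, σ t) + ∑ t, c t := by
          rw [Finset.sum_add_distrib, Finset.mul_sum]
  -- ∑ σ² ≤ 4γ
  have hsq : ∑ t, (σ t) ^ 2 ≤ 4 * γ := by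
    refine le_trans (Finset.sum_le_sum fun t _ => ?_) hlog
    exact aux_le_two_log (by positivity) (by nlinarith [hσ0 t, hσ1 t])
  -- Cauchy–Schwarz
  have hcs : (∑ t, σ t) ^ 2 ≤ (T : ℝ) * ∑ t, (σ t) ^ 2 := by
    have := sq_sum_le_card_mul_sum_sq (s := Finset.univ) (f := σ)
    simpa using this
  have hsum_nonneg : 0 ≤ ∑ t, σ t := Finset.sum_nonneg fun t _ => hσ0 t
  have h2 : ∑ t, σ t ≤ Real.sqrt ((T : ℝ) * (4 * γ)) := by
    rw [← Real.sqrt_sq hsum_nonneg]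
    apply Real.sqrt_le_sqrt
    calc (∑ t, σ t) ^ 2 ≤ (T : ℝ) * ∑ t, (σ t) ^ 2 := hcs
      _ ≤ (T : ℝ) * (4 * γ) := by
          exact mul_le_mul_of_nonneg_left hsq (Nat.cast_nonneg T)
  have h3 : Real.sqrt ((T : ℝ) * (4 * γ)) = 2 * Real.sqrt ((T : ℝ) * γ) := by
    rw [show (T : ℝ) * (4 * γ) = 2^2 * ((T : ℝ) * γ) by ring,
      Real.sqrt_mul (by positivity), Real.sqrt_sq (by norm_num)]
  calc ∑ t, max 0 (r t) ≤ 2 * β * (∑ t, σ t) + ∑ t, c t := h1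
    _ ≤ 2 * β * (2 * Real.sqrt ((T : ℝ) * γ)) + ∑ t, c t := by
        rw [← h3]; gcongr
    _ = 4 * β * Real.sqrt ((T : ℝ) * γ) + ∑ t, c t := by ring
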